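/- Let X be a topological space. The family of sets B(ε) = {(f,g) ∈ C(X) × C(X) : |f(x) − g(x)| < ε(x) for all x ∈ X}, where ε ranges over the lower semicontinuous functions from X to (0,1), is a base for a uniformity 𝒰_Γ on C(X), the topology induced by 𝒰_Γ is the graph topology τ_Γ, and the uniform space (C(X), 𝒰_Γ) is complete. -/

import Mathlib

open TopologicalSpace Set Filter Uniformity UniformConvergence Topology

/-- The graph of a continuous map, as a subset of `X × Y`. -/
def graphSet {X Y : Type*} [TopologicalSpace X] [TopologicalSpace Y] (f : C(X, Y)) :
    Set (X × Y) := {p | p.2 = f p.1}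

/-- The graph topology `τ_Γ` on `C(X, Y)`, generated by the sets
`F_G = {f | graph f ⊆ G}` for `G` open in `X × Y`. -/
def graphTopology (X Y : Type*) [TopologicalSpace X] [TopologicalSpace Y] :
    TopologicalSpace C(X, Y) :=
  generateFrom {S | ∃ G : Set (X × Y), IsOpen G ∧ S = {f : C(X, Y) | graphSet f ⊆ G}}

section Aux

variable {X : Type*} [TopologicalSpace X]

private lemma lsc_half {ε : X → ℝ} (h : LowerSemicontinuous ε) :
    LowerSemicontinuous fun x => ε x / 2 := by
  intro x y hy
  have h2 : (2 : ℝ) * y < ε x := by linarith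
  filter_upwards [h x (2 * y) h2] with z hz
  linarith

/-- Key construction: given `f` with graph inside an open `G`, there is a lower
semicontinuous `ε : X → (0,1)` such that any `g` with `|f - g| < ε` pointwise
also has graph inside `G`. -/
private lemma exists_lsc_of_graph_subset (f : C(X, ℝ)) {G : Set (X × ℝ)} (hG : IsOpen G)
    (hfG : ∀ x, (x, f x) ∈ G) :
    ∃ ε : X → ℝ, LowerSemicontinuous ε ∧ (∀ x, ε x ∈ Set.Ioo (0 : ℝ) 1) ∧
      ∀ g : C(X, ℝ), (∀ x, |f x - g x| < ε x) → ∀ x, (x, g x) ∈ G := by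
  set S : X → Set ℝ := fun x => {r | r ≤ 1 ∧ ∃ U, IsOpen U ∧ x ∈ U ∧
    ∀ y ∈ U, ∀ t : ℝ, |t - f y| < r → (y, t) ∈ G} with hSdef
  have hzero : ∀ x, (0 : ℝ) ∈ S x := fun x =>
    ⟨zero_le_one, univ, isOpen_univ, mem_univ x,
      fun y _ t ht => absurd ht (not_lt.2 (abs_nonneg _))⟩
  have hbdd : ∀ x, BddAbove (S x) := fun x => ⟨1, fun r hr => hr.1⟩
  have hnonempty : ∀ x, (S x).Nonempty := fun x => ⟨0, hzero x⟩
  have hpos : ∀ x, ∃ r ∈ S x, 0 < r := by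
    intro x
    obtain ⟨U, V, hU, hV, hxU, hfV, hUV⟩ := isOpen_prod_iff.1 hG x (f x) (hfG x)
    obtain ⟨s, hs, hball⟩ := Metric.isOpen_iff.1 hV (f x) hfV
    refine ⟨min (s / 2) 1, ⟨min_le_right _ _,
      U ∩ f ⁻¹' Metric.ball (f x) (s / 2),
      hU.inter (Metric.isOpen_ball.preimage f.continuous),
      ⟨hxU, by simp [Metric.mem_ball]; positivity⟩, ?_⟩, by positivity⟩
    rintro y ⟨hyU, hyb⟩ t ht
    have h1 : |t - f y| < s / 2 := lt_of_lt_of_le ht (min_le_left _ _)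
    have h2 : |f y - f x| < s / 2 := by
      simpa [Real.dist_eq] using hyb
    have htx : t ∈ Metric.ball (f x) s := by
      simp only [Metric.mem_ball, Real.dist_eq]
      calc |t - f x| ≤ |t - f y| + |f y - f x| := abs_sub_le _ _ _
        _ < s := by linarith
    exact hUV ⟨hyU, hball htx⟩
  have hsup_pos : ∀ x, 0 < sSup (S x) := by
    intro x
    obtain ⟨r, hrS, hr⟩ := hpos x
    exact lt_of_lt_of_le hr (le_csSup (hbdd x) hrS)
  have hsup_le : ∀ x, sSup (S x) ≤ 1 := fun x => csSup_le (hnonempty x) fun r hr => hr.1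
  refine ⟨fun x => sSup (S x) / 2, ?_, ?_, ?_⟩
  · -- lower semicontinuity
    intro x c hc
    have hc' : c < sSup (S x) / 2 := hc
    have h2c : 2 * c < sSup (S x) := by linarith
    obtain ⟨r, hrS, hrc⟩ := exists_lt_of_lt_csSup (hnonempty x) h2c
    obtain ⟨hr1, U, hUo, hxU, hprop⟩ := hrS
    filter_upwards [hUo.mem_nhds hxU] with y hy
    have hrSy : r ∈ S y := ⟨hr1, U, hUo, hy, hprop⟩
    have hry : r ≤ sSup (S y) := le_csSup (hbdd y) hrSy
    show c < sSup (S y) / 2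
    linarith
  · intro x
    constructor
    · have := hsup_pos x; positivity
    · have := hsup_le x; linarith
  · intro g hg x
    have h1 : sSup (S x) / 2 < sSup (S x) := by
      have := hsup_pos x; linarith
    obtain ⟨r, hrS, hlt⟩ := exists_lt_of_lt_csSup (hnonempty x) h1
    obtain ⟨hr1, U, hUo, hxU, hprop⟩ := hrS
    refine hprop x hxU (g x) ?_
    have := hg x
    rw [abs_sub_comm]
    exact lt_trans this hlt

/-- The basis predicate. -/
private def gp (X : Type*) [TopologicalSpace X] : (X → ℝ) → Prop :=
  fun ε => LowerSemicontinuous ε ∧ ∀ x, ε x ∈ Set.Ioo (0 : ℝ) 1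

/-- The basic entourages. -/
private def gB (X : Type*) [TopologicalSpace X] : (X → ℝ) → Set (C(X, ℝ) × C(X, ℝ)) :=
  fun ε => {p | ∀ x, |p.1 x - p.2 x| < ε x}

private lemma lsc_min {ε₁ ε₂ : X → ℝ} (h₁ : LowerSemicontinuous ε₁)
    (h₂ : LowerSemicontinuous ε₂) : LowerSemicontinuous fun x => min (ε₁ x) (ε₂ x) := by
  intro x y hy
  have hy1 : y < ε₁ x := lt_of_lt_of_le hy (min_le_left _ _)
  have hy2 : y < ε₂ x := lt_of_lt_of_le hy (min_le_right _ _)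
  filter_upwards [h₁ x y hy1, h₂ x y hy2] with z hz1 hz2
  exact lt_min hz1 hz2

private lemma gp_half {ε : X → ℝ} (h : gp X ε) : gp X fun x => ε x / 2 := by
  refine ⟨lsc_half h.1, fun x => ?_⟩
  obtain ⟨h1, h2⟩ := h.2 x
  exact ⟨by positivity, by linarith⟩

end Aux

/-- the sets
`B(ε) = {(f,g) : |f x - g x| < ε x for all x}`, for `ε : X → (0,1)` lower
semicontinuous, form a base for a uniformity `𝒰_Γ` on `C(X)`; the topology induced
by `𝒰_Γ` is the graph topology `τ_Γ`; and `(C(X), 𝒰_Γ)` is complete. -/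
theorem exists_complete_uniformity_graphTopology (X : Type*) [TopologicalSpace X] :
    ∃ U : UniformSpace C(X, ℝ),
      (@uniformity C(X, ℝ) U).HasBasis
        (fun ε : X → ℝ => LowerSemicontinuous ε ∧ ∀ x, ε x ∈ Set.Ioo (0 : ℝ) 1)
        (fun ε => {p : C(X, ℝ) × C(X, ℝ) | ∀ x, |p.1 x - p.2 x| < ε x}) ∧
      U.toTopologicalSpace = graphTopology X ℝ ∧
      @CompleteSpace C(X, ℝ) U := by
  classical
  have hne : ∃ ε : X → ℝ, gp X ε :=
    ⟨fun _ => 1 / 2, lowerSemicontinuous_const, fun x => ⟨by norm_num, by norm_num⟩⟩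
  have hdir : ∀ ε₁, gp X ε₁ → ∀ ε₂, gp X ε₂ →
      ∃ ε₃, gp X ε₃ ∧ gB X ε₃ ⊆ gB X ε₁ ∧ gB X ε₃ ⊆ gB X ε₂ := by
    intro ε₁ h₁ ε₂ h₂
    refine ⟨fun x => min (ε₁ x) (ε₂ x),
      ⟨lsc_min h₁.1 h₂.1, fun x => ⟨lt_min (h₁.2 x).1 (h₂.2 x).1,
        min_lt_iff.2 (Or.inl (h₁.2 x).2)⟩⟩,
      fun p hp x => lt_of_lt_of_le (hp x) (min_le_left _ _),
      fun p hp x => lt_of_lt_of_le (hp x) (min_le_right _ _)⟩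
  have hbasis0 : (⨅ (ε : X → ℝ) (_ : gp X ε), 𝓟 (gB X ε)).HasBasis (gp X) (gB X) :=
    Filter.hasBasis_biInf_principal' hdir hne
  let core : UniformSpace.Core C(X, ℝ) :=
    { uniformity := ⨅ (ε : X → ℝ) (_ : gp X ε), 𝓟 (gB X ε)
      refl := le_iInf₂ fun ε hε => principal_mono.2 fun p hp x => by
        have h12 : p.1 = p.2 := hp
        simp only [h12, sub_self, abs_zero]
        exact (hε.2 x).1
      symm := (hbasis0.tendsto_iff hbasis0).2 fun ε hε =>
        ⟨ε, hε, fun p hp x => by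
          simpa [abs_sub_comm] using hp x⟩
      comp := le_iInf₂ fun ε hε => le_principal_iff.2 <| by
        refine mem_of_superset (mem_lift' (hbasis0.mem_of_mem (gp_half hε))) ?_
        rintro ⟨f, g⟩ ⟨h, hfh, hhg⟩ x
        calc |f x - g x| ≤ |f x - h x| + |h x - g x| := abs_sub_le _ _ _
          _ < ε x / 2 + ε x / 2 := add_lt_add (hfh x) (hhg x)
          _ = ε x := by ring }
  have hbasis : core.uniformity.HasBasis (gp X) (gB X) := hbasis0
  letI U : UniformSpace C(X, ℝ) := .ofCore core
  have hbasisU : (𝓤 C(X, ℝ)).HasBasis (gp X) (gB X) := hbasis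
  refine ⟨U, hbasisU, ?_, ?_⟩
  · -- topology equality
    refine le_antisymm ?_ ?_
    · -- uniform topology ≤ graph topology
      apply le_generateFrom
      rintro S ⟨G, hG, rfl⟩
      rw [isOpen_uniformity]
      intro f hf
      have hfG : ∀ x, (x, f x) ∈ G := fun x => hf rfl
      obtain ⟨ε, hlsc, hio, hball⟩ := exists_lsc_of_graph_subset f hG hfG
      refine mem_of_superset (hbasisU.mem_of_mem ⟨hlsc, hio⟩) ?_
      intro p hp hp1
      rintro ⟨x, t⟩ ht
      have ht' : t = p.2 x := ht
      subst ht'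
      refine hball p.2 (fun x => ?_) x
      have := hp x
      rwa [hp1] at this
    · -- graph topology ≤ uniform topology
      intro S hS
      have hS' : ∀ f ∈ S, {p : C(X, ℝ) × C(X, ℝ) | p.1 = f → p.2 ∈ S} ∈ 𝓤 C(X, ℝ) :=
        isOpen_uniformity.1 hS
      have key : ∀ f ∈ S, ∃ T : Set C(X, ℝ), T ⊆ S ∧ IsOpen[graphTopology X ℝ] T ∧ f ∈ T := by
        intro f hf
        obtain ⟨ε, hε, hsub⟩ := hbasisU.mem_iff.1 (hS' f hf)
        set G : Set (X × ℝ) := {p | |p.2 - f p.1| < ε p.1} with hGdef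
        have hGopen : IsOpen G := by
          have hlsc : LowerSemicontinuous fun p : X × ℝ => ε p.1 - |p.2 - f p.1| := by
            have h1 : LowerSemicontinuous fun p : X × ℝ => ε p.1 :=
              hε.1.comp continuous_fst
            have h2 : Continuous fun p : X × ℝ => -|p.2 - f p.1| :=
              ((continuous_snd.sub (f.continuous.comp continuous_fst)).abs).neg
            simpa [sub_eq_add_neg] using h1.add h2.lowerSemicontinuous
          have : G = (fun p : X × ℝ => ε p.1 - |p.2 - f p.1|) ⁻¹' Ioi 0 := by
            ext p
            simp [hGdef, sub_pos]
          rw [this]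
          exact hlsc.isOpen_preimage 0
        refine ⟨{g : C(X, ℝ) | graphSet g ⊆ G}, ?_, ?_, ?_⟩
        · intro g hg
          have hmemB : (f, g) ∈ gB X ε := by
            intro x
            have : (x, g x) ∈ G := hg rfl
            simpa [hGdef, abs_sub_comm] using this
          exact hsub hmemB rfl
        · exact isOpen_generateFrom_of_mem ⟨G, hGopen, rfl⟩
        · rintro ⟨x, t⟩ ht
          have ht' : t = f x := ht
          subst ht'
          show |f x - f x| < ε x
          simpa using (hε.2 x).1
      choose T hTS hTopen hfT using key
      have hSeq : S = ⋃₀ {A : Set C(X, ℝ) | ∃ f, ∃ hf : f ∈ S, A = T f hf} := by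
        ext g
        constructor
        · intro hg
          exact ⟨T g hg, ⟨g, hg, rfl⟩, hfT g hg⟩
        · rintro ⟨A, ⟨f, hf, rfl⟩, hgA⟩
          exact hTS f hf hgA
      rw [hSeq]
      exact (graphTopology X ℝ).isOpen_sUnion _ (by rintro A ⟨f, hf, rfl⟩; exact hTopen f hf)
  · -- completeness
    constructor
    intro F hF
    obtain ⟨hneF, hsets⟩ := cauchy_iff.1 hF
    haveI := hneF
    -- uniform continuity of the inclusion into `X →ᵤ ℝ`
    have hufb : (𝓤 (X →ᵤ ℝ)).HasBasis (fun c : ℝ => 0 < c)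
        (UniformFun.gen X ℝ ∘ fun c => {p : ℝ × ℝ | dist p.1 p.2 < c}) :=
      UniformFun.hasBasis_uniformity_of_basis X ℝ Metric.uniformity_basis_dist
    have hucont : UniformContinuous fun g : C(X, ℝ) => UniformFun.ofFun ⇑g := by
      rw [UniformContinuous, hbasisU.tendsto_iff hufb]
      intro c hc
      refine ⟨fun _ => min c (1 / 2), ⟨lowerSemicontinuous_const,
        fun x => ⟨lt_min hc (by norm_num), min_lt_iff.2 (Or.inr (by norm_num))⟩⟩, ?_⟩
      intro p hp x
      have := hp x
      simp only [UniformFun.gen, Real.dist_eq]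
      calc |p.1 x - p.2 x| < min c (1 / 2) := this
        _ ≤ c := min_le_left _ _
    have hcF : Cauchy (F.map fun g : C(X, ℝ) => UniformFun.ofFun ⇑g) := hF.map hucont
    obtain ⟨φ, hφ⟩ := CompleteSpace.complete hcF
    have htu : TendstoUniformly (fun g : C(X, ℝ) => ⇑g) (UniformFun.toFun φ) F := by
      have : Tendsto (fun g : C(X, ℝ) => UniformFun.ofFun ⇑g) F (nhds φ) := hφ
      exact UniformFun.tendsto_iff_tendstoUniformly.1 this
    have hcont : Continuous (UniformFun.toFun φ) :=
      htu.continuous (Frequently.of_forall fun g : C(X, ℝ) => g.continuous)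
    refine ⟨⟨UniformFun.toFun φ, hcont⟩, ((nhds_basis_uniformity' hbasisU).ge_iff).2 ?_⟩
    rintro ε hε
    obtain ⟨A, hA, hAA⟩ := hsets (gB X fun x => ε x / 2) (hbasisU.mem_of_mem (gp_half hε))
    refine mem_of_superset hA ?_
    intro h hh x
    have hev : Tendsto (fun g : C(X, ℝ) => g x) F (nhds (UniformFun.toFun φ x)) :=
      htu.tendsto_at x
    have hmem : ∀ᶠ (g : C(X, ℝ)) in F, g x ∈ Metric.closedBall (h x) (ε x / 2) := by
      filter_upwards [hA] with g hg
      have hgx : |h x - g x| < ε x / 2 := hAA (Set.mk_mem_prod hh hg) x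
      rw [Metric.mem_closedBall, Real.dist_eq, abs_sub_comm]
      exact hgx.le
    have hfx : UniformFun.toFun φ x ∈ Metric.closedBall (h x) (ε x / 2) :=
      Metric.isClosed_closedBall.mem_of_tendsto hev hmem
    have h1 : |UniformFun.toFun φ x - h x| ≤ ε x / 2 := by
      rwa [Metric.mem_closedBall, Real.dist_eq] at hfx
    have h2 : 0 < ε x := (hε.2 x).1
    show |UniformFun.toFun φ x - h x| < ε x
    linarith
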